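/- The group-wise soft-thresholding formula solves the single-group sparse group lasso subproblem: for v ∈ ℝ^d and λ, η ≥ 0, the unique minimizer of ½‖x − v‖₂² + λ‖x‖₁ + η‖x‖₂ over ℝ^d is x* = max(‖v^λ‖₂ − η, 0) · v^λ/‖v^λ‖₂ when v^λ ≠ 0, and x* = 0 when v^λ = 0, where v^λ is the coordinatewise soft-thresholding v^λ_j = sign(v_j)·max(|v_j| − λ, 0). -/

import Mathlib

theorem groupwise_soft_thresholding_solves_sgl (d : ℕ) (v : Fin d → ℝ)
    (lam η : ℝ) (hlam : 0 ≤ lam) (hη : 0 ≤ η)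
    (vlam : Fin d → ℝ) (hvlam : ∀ j, vlam j = Real.sign (v j) * max (|v j| - lam) 0)
    (xstar : Fin d → ℝ)
    (hxstar : xstar = if Real.sqrt (∑ j, vlam j ^ 2) = 0 then 0
      else fun j => max (Real.sqrt (∑ j', vlam j' ^ 2) - η) 0 * vlam j /
        Real.sqrt (∑ j', vlam j' ^ 2)) :
    ∀ x : Fin d → ℝ,
      ((1 / 2) * ∑ j, (xstar j - v j) ^ 2 + lam * ∑ j, |xstar j| +
          η * Real.sqrt (∑ j, xstar j ^ 2) ≤
        (1 / 2) * ∑ j, (x j - v j) ^ 2 + lam * ∑ j, |x j| +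
          η * Real.sqrt (∑ j, x j ^ 2)) ∧
      (((1 / 2) * ∑ j, (x j - v j) ^ 2 + lam * ∑ j, |x j| +
          η * Real.sqrt (∑ j, x j ^ 2) ≤
        (1 / 2) * ∑ j, (xstar j - v j) ^ 2 + lam * ∑ j, |xstar j| +
          η * Real.sqrt (∑ j, xstar j ^ 2)) → x = xstar) := by
  have hsum_nonneg : 0 ≤ ∑ j, vlam j ^ 2 := Finset.sum_nonneg fun j _ => sq_nonneg _
  set r := Real.sqrt (∑ j, vlam j ^ 2) with hr_def
  have hr0 : 0 ≤ r := Real.sqrt_nonneg _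
  have hrsq : r ^ 2 = ∑ j, vlam j ^ 2 := Real.sq_sqrt hsum_nonneg
  have hvz : r = 0 → ∀ j, vlam j = 0 := by
    intro h j
    have h0 : ∑ j, vlam j ^ 2 = 0 := by rw [← hrsq, h]; ring
    have h1 := (Finset.sum_eq_zero_iff_of_nonneg
      (fun j _ => sq_nonneg (vlam j))).mp h0 j (Finset.mem_univ j)
    exact pow_eq_zero_iff (two_ne_zero) |>.mp h1
  set c := max (r - η) 0 / r with hc_def
  have hc0 : 0 ≤ c := div_nonneg (le_max_right _ _) hr0
  have hx : ∀ j, xstar j = c * vlam j := by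
    intro j
    rw [hxstar]
    by_cases h : r = 0
    · simp [h, hvz h j]
    · simp only [if_neg h]
      rw [hc_def]; ring
  -- per-coordinate facts about soft thresholding
  have L1 : ∀ j, |v j - vlam j| ≤ lam := by
    intro j
    rcases lt_trichotomy (v j) 0 with hv | hv | hv
    · rw [hvlam j, Real.sign_of_neg hv, abs_of_neg hv]
      rcases le_total (-v j - lam) 0 with h | h
      · rw [max_eq_right h, abs_le]; constructor <;> nlinarith
      · rw [max_eq_left h, abs_le]; constructor <;> nlinarith
    · simp [hvlam j, hv, hlam]
    · rw [hvlam j, Real.sign_of_pos hv, abs_of_pos hv]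
      rcases le_total (v j - lam) 0 with h | h
      · rw [max_eq_right h, abs_le]; constructor <;> nlinarith
      · rw [max_eq_left h, abs_le]; constructor <;> nlinarith
  have L2 : ∀ j, (v j - vlam j) * vlam j = lam * |vlam j| := by
    intro j
    rcases lt_trichotomy (v j) 0 with hv | hv | hv
    · rw [hvlam j, Real.sign_of_neg hv, abs_of_neg hv]
      rcases le_total (-v j - lam) 0 with h | h
      · rw [max_eq_right h]; simp
      · rw [max_eq_left h, abs_mul]
        rw [abs_of_neg (by norm_num : (-1 : ℝ) < 0), abs_of_nonneg h]
        ring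
    · simp [hvlam j, hv]
    · rw [hvlam j, Real.sign_of_pos hv, abs_of_pos hv]
      rcases le_total (v j - lam) 0 with h | h
      · rw [max_eq_right h]; simp
      · rw [max_eq_left h, abs_mul]
        rw [abs_of_nonneg (by norm_num : (0:ℝ) ≤ 1), abs_of_nonneg h]
        ring
  intro x
  -- main estimates
  have E1 : ∑ j, (v j - vlam j) * x j ≤ lam * ∑ j, |x j| := by
    rw [Finset.mul_sum]
    refine Finset.sum_le_sum fun j _ => ?_
    calc (v j - vlam j) * x j ≤ |(v j - vlam j) * x j| := le_abs_self _
      _ = |v j - vlam j| * |x j| := abs_mul _ _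
      _ ≤ lam * |x j| := mul_le_mul_of_nonneg_right (L1 j) (abs_nonneg _)
  have E2 : ∑ j, (v j - vlam j) * xstar j = lam * ∑ j, |xstar j| := by
    rw [Finset.mul_sum]
    refine Finset.sum_congr rfl fun j _ => ?_
    calc (v j - vlam j) * xstar j = c * ((v j - vlam j) * vlam j) := by rw [hx j]; ring
      _ = c * (lam * |vlam j|) := by rw [L2 j]
      _ = lam * |xstar j| := by rw [hx j, abs_mul, abs_of_nonneg hc0]; ring
  have E3 : (1 - c) * ∑ j, vlam j * x j ≤ η * Real.sqrt (∑ j, x j ^ 2) := by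
    by_cases h : r = 0
    · have hz : ∑ j, vlam j * x j = 0 :=
        Finset.sum_eq_zero fun j _ => by rw [hvz h j]; ring
      rw [hz, mul_zero]
      positivity
    · have hrpos : 0 < r := lt_of_le_of_ne hr0 (Ne.symm h)
      have hmaxmin : max (r - η) 0 + min r η = r := by
        rcases le_total r η with hh | hh
        · rw [max_eq_right (by linarith), min_eq_left hh]; ring
        · rw [max_eq_left (by linarith), min_eq_right hh]; ring
      have h1c : 1 - c = min r η / r := by
        rw [hc_def]; field_simp; linarith
      have h1c0 : 0 ≤ 1 - c := by
        rw [h1c]; exact div_nonneg (le_min hr0 hη) hr0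
      have hcs : ∑ j, vlam j * x j ≤ r * Real.sqrt (∑ j, x j ^ 2) :=
        Real.sum_mul_le_sqrt_mul_sqrt Finset.univ vlam x
      calc (1 - c) * ∑ j, vlam j * x j
          ≤ (1 - c) * (r * Real.sqrt (∑ j, x j ^ 2)) :=
            mul_le_mul_of_nonneg_left hcs h1c0
        _ = min r η * Real.sqrt (∑ j, x j ^ 2) := by rw [h1c]; field_simp
        _ ≤ η * Real.sqrt (∑ j, x j ^ 2) :=
            mul_le_mul_of_nonneg_right (min_le_right _ _) (Real.sqrt_nonneg _)
  have hxs2 : ∑ j, xstar j ^ 2 = (c * r) ^ 2 := by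
    have : ∑ j, xstar j ^ 2 = ∑ j, c ^ 2 * vlam j ^ 2 :=
      Finset.sum_congr rfl fun j _ => by rw [hx j]; ring
    rw [this, ← Finset.mul_sum, ← hrsq]; ring
  have hsqrtxs : Real.sqrt (∑ j, xstar j ^ 2) = c * r := by
    rw [hxs2, Real.sqrt_sq (mul_nonneg hc0 hr0)]
  have E4 : (1 - c) * (c * ∑ j, vlam j ^ 2) = η * Real.sqrt (∑ j, xstar j ^ 2) := by
    rw [hsqrtxs, ← hrsq]
    by_cases hc : c = 0
    · simp [hc]
    · have hcpos : 0 < c := lt_of_le_of_ne hc0 (Ne.symm hc)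
      have hrpos : 0 < r := by
        rcases eq_or_lt_of_le hr0 with h | h
        · exfalso; apply hc; rw [hc_def, ← h]; simp
        · exact h
      have hmax : 0 < max (r - η) 0 := by
        have : max (r - η) 0 = c * r := by rw [hc_def]; field_simp
        rw [this]; positivity
      have hrη : η < r := by
        by_contra hcon
        push_neg at hcon
        rw [max_eq_right (by linarith)] at hmax
        exact lt_irrefl 0 hmax
      have hcval : c = (r - η) / r := by
        rw [hc_def, max_eq_left (by linarith)]
      rw [hcval]
      field_simp
      ring
  -- quadratic expansion
  have HA : ∑ j, (x j - v j) ^ 2 = ∑ j, (xstar j - v j) ^ 2 + ∑ j, (x j - xstar j) ^ 2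
      + 2 * ∑ j, (xstar j - v j) * (x j - xstar j) := by
    rw [Finset.mul_sum, ← Finset.sum_add_distrib, ← Finset.sum_add_distrib]
    exact Finset.sum_congr rfl fun j _ => by ring
  have Hsum : ∑ j, (xstar j - v j) * (x j - xstar j)
      = (∑ j, (v j - vlam j) * xstar j) - (∑ j, (v j - vlam j) * x j)
        + (1 - c) * (c * ∑ j, vlam j ^ 2) - (1 - c) * ∑ j, vlam j * x j := by
    have hterm : ∀ j, (xstar j - v j) * (x j - xstar j)
        = (v j - vlam j) * xstar j - (v j - vlam j) * x j
          + (1 - c) * (c * vlam j ^ 2) - (1 - c) * (vlam j * x j) := by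
      intro j; rw [hx j]; ring
    calc ∑ j, (xstar j - v j) * (x j - xstar j)
        = ∑ j, ((v j - vlam j) * xstar j - (v j - vlam j) * x j
          + (1 - c) * (c * vlam j ^ 2) - (1 - c) * (vlam j * x j)) :=
          Finset.sum_congr rfl fun j _ => hterm j
      _ = _ := by
          simp only [Finset.sum_sub_distrib, Finset.sum_add_distrib, ← Finset.mul_sum]
  have hD0 : 0 ≤ ∑ j, (x j - xstar j) ^ 2 := Finset.sum_nonneg fun j _ => sq_nonneg _
  have key : (1 / 2) * ∑ j, (xstar j - v j) ^ 2 + lam * ∑ j, |xstar j| +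
      η * Real.sqrt (∑ j, xstar j ^ 2) + (1 / 2) * ∑ j, (x j - xstar j) ^ 2 ≤
      (1 / 2) * ∑ j, (x j - v j) ^ 2 + lam * ∑ j, |x j| +
      η * Real.sqrt (∑ j, x j ^ 2) := by
    linarith [E1, E2, E3, E4, HA, Hsum]
  constructor
  · linarith
  · intro hle
    have hD : ∑ j, (x j - xstar j) ^ 2 ≤ 0 := by linarith
    funext j
    have := (Finset.sum_eq_zero_iff_of_nonneg (fun j _ => sq_nonneg (x j - xstar j))).mp
      (le_antisymm hD hD0) j (Finset.mem_univ j)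
    have := pow_eq_zero_iff (two_ne_zero) |>.mp this
    linarith
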